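/- arXiv:0907.4631 — 3 statements merged into one kernel-verified Lean document; each statement's English description precedes it below -/
import Mathlib

section
/- Let A be an n×n matrix, p ≥ 1, and b_0, …, b_p ∈ ℝⁿ. The function u(t) = φ_0(tA) b_0 + t φ_1(tA) b_1 + t² φ_2(tA) b_2 + ⋯ + t^p φ_p(tA) b_p solves the initial value problem u'(t) = A u(t) + b_1 + t b_2 + ⋯ + (t^{p−1}/(p−1)!) b_p with u(0) = b_0. -/
open scoped Nat
open NormedSpace

/-- Matrix `φ`-functions: `φ_0(M) = exp(M)` and, for `ℓ ≥ 1`,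
`φ_ℓ(M) = (1/(ℓ-1)!) ∫₀¹ exp((1-θ)M) θ^{ℓ-1} dθ` (defined entrywise). -/
noncomputable def phiM {n : ℕ} (l : ℕ) (M : Matrix (Fin n) (Fin n) ℝ) :
    Matrix (Fin n) (Fin n) ℝ :=
  if l = 0 then exp M
  else Matrix.of fun i j =>
    (1 / ((l - 1)! : ℝ)) * ∫ θ in (0:ℝ)..1, (exp ((1 - θ) • M)) i j * θ ^ (l - 1)

namespace PhiIVP

@[reducible] noncomputable def matNR (n : ℕ) : NormedRing (Matrix (Fin n) (Fin n) ℝ) :=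
  { (Matrix.linftyOpNormedRing : NormedRing (Matrix (Fin n) (Fin n) ℝ)) with
    toPseudoMetricSpace :=
      (Matrix.linftyOpNormedRing : NormedRing (Matrix (Fin n) (Fin n) ℝ)).toPseudoMetricSpace.replaceUniformity
        (U := (inferInstance : UniformSpace (Matrix (Fin n) (Fin n) ℝ))) rfl }

@[reducible] noncomputable def matNA (n : ℕ) :
    @NormedAlgebra ℝ (Matrix (Fin n) (Fin n) ℝ) _ (@NormedRing.toSeminormedRing _ (matNR n)) :=
  letI := matNR n
  { (Matrix.instAlgebra : Algebra ℝ (Matrix (Fin n) (Fin n) ℝ)) with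
    norm_smul_le := fun r M =>
      (Matrix.linftyOpNormedAlgebra (R := ℝ) (α := ℝ) (n := Fin n)).norm_smul_le r M }

@[reducible] noncomputable def matNAQ (n : ℕ) :
    @NormedAlgebra ℚ (Matrix (Fin n) (Fin n) ℝ) _ (@NormedRing.toSeminormedRing _ (matNR n)) :=
  letI := matNR n
  { (Matrix.instAlgebra : Algebra ℚ (Matrix (Fin n) (Fin n) ℝ)) with
    norm_smul_le := fun r M =>
      (Matrix.linftyOpNormedAlgebra (R := ℚ) (α := ℝ) (n := Fin n)).norm_smul_le r M }

open MeasureTheory Set intervalIntegral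

attribute [local instance] PhiIVP.matNR PhiIVP.matNA PhiIVP.matNAQ

variable {n : ℕ} (A : Matrix (Fin n) (Fin n) ℝ)

/-- The matrix-valued integral `∫₀¹ θ^j exp((1-θ)t A) dθ`. -/
noncomputable def G (j : ℕ) (t : ℝ) : Matrix (Fin n) (Fin n) ℝ :=
  ∫ θ in (0:ℝ)..1, θ ^ j • exp (((1 - θ) * t) • A)

/-- `M ↦ M.mulVec c` as a continuous linear map. -/
noncomputable def mv (c : Fin n → ℝ) : Matrix (Fin n) (Fin n) ℝ →L[ℝ] (Fin n → ℝ) :=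
  LinearMap.toContinuousLinearMap
    { toFun := fun M => M.mulVec c
      map_add' := fun M N => Matrix.add_mulVec M N c
      map_smul' := fun r M => Matrix.smul_mulVec r M c }

@[simp] lemma mv_apply (c : Fin n → ℝ) (M : Matrix (Fin n) (Fin n) ℝ) :
    mv c M = M.mulVec c := by
  rw [mv, LinearMap.coe_toContinuousLinearMap']; rfl

/-- Entry evaluation as a continuous linear map. -/
noncomputable def entryCLM (i k : Fin n) : Matrix (Fin n) (Fin n) ℝ →L[ℝ] ℝ :=
  LinearMap.toContinuousLinearMap
    { toFun := fun M : Matrix (Fin n) (Fin n) ℝ => M i k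
      map_add' := fun _ _ => rfl
      map_smul' := fun _ _ => rfl }

@[simp] lemma entryCLM_apply (i k : Fin n) (M : Matrix (Fin n) (Fin n) ℝ) :
    entryCLM i k M = M i k := by
  rw [entryCLM, LinearMap.coe_toContinuousLinearMap']; rfl

lemma contExpAff (t : ℝ) : Continuous fun θ : ℝ => exp (((1 - θ) * t) • A) :=
  exp_continuous.comp (((continuous_const.sub continuous_id).mul continuous_const).smul
    continuous_const)

lemma intg (j : ℕ) (t : ℝ) :
    IntervalIntegrable (fun θ : ℝ => θ ^ j • exp (((1 - θ) * t) • A)) volume 0 1 :=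
  ((continuous_pow j).smul (contExpAff A t)).intervalIntegrable _ _

lemma intgA (j : ℕ) (t : ℝ) :
    IntervalIntegrable (fun θ : ℝ => θ ^ j • (A * exp (((1 - θ) * t) • A))) volume 0 1 :=
  ((continuous_pow j).smul (continuous_const.mul (contExpAff A t))).intervalIntegrable _ _

/-- The entries of `G` are the integrals appearing in `phiM`. -/
lemma phiM_eq (j : ℕ) (t : ℝ) :
    phiM (j + 1) (t • A) = ((j ! : ℝ))⁻¹ • G A j t := by
  ext i k
  have h1 : (G A j t) i k = entryCLM i k (G A j t) := by rw [entryCLM_apply]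
  have h2 : entryCLM i k (G A j t)
      = ∫ θ in (0:ℝ)..1, entryCLM i k (θ ^ j • exp (((1 - θ) * t) • A)) :=
    ((entryCLM i k).intervalIntegral_comp_comm (intg A j t)).symm
  simp only [phiM, Nat.succ_ne_zero, if_false, Matrix.of_apply, Matrix.smul_apply,
    Nat.add_sub_cancel, smul_eq_mul, one_div]
  rw [h1, h2]
  congr 1
  apply intervalIntegral.integral_congr
  intro θ _
  dsimp only
  rw [smul_smul, entryCLM_apply, Matrix.smul_apply, smul_eq_mul]
  exact mul_comm _ _

lemma expD (s : ℝ) : HasDerivAt (fun u : ℝ => exp (u • A)) (A * exp (s • A)) s :=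
  hasDerivAt_exp_smul_const' A s

/-- derivative in `θ` of `θ ↦ exp((1-θ)t • A)`. -/
lemma expDtheta (t θ : ℝ) :
    HasDerivAt (fun θ : ℝ => exp (((1 - θ) * t) • A))
      ((-t) • (A * exp (((1 - θ) * t) • A))) θ := by
  have h1 : HasDerivAt (fun θ : ℝ => (1 - θ) * t) (-t) θ := by
    simpa using ((hasDerivAt_id θ).const_sub 1).mul_const t
  exact (expD A ((1 - θ) * t)).scomp θ h1

/-- derivative in `t` of `t ↦ exp((1-θ)t • A)`. -/
lemma expDt (θ t : ℝ) :
    HasDerivAt (fun t : ℝ => exp (((1 - θ) * t) • A))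
      ((1 - θ) • (A * exp (((1 - θ) * t) • A))) t := by
  have e : ∀ u : ℝ, u • ((1 - θ) • A) = ((1 - θ) * u) • A := fun u => by
    rw [smul_smul, mul_comm]
  have h := hasDerivAt_exp_smul_const' ((1 - θ) • A) t
  simp only [e, smul_mul_assoc] at h
  exact h

/-- Fundamental theorem of calculus identity. -/
lemma ftc (j : ℕ) (t : ℝ) :
    ((j : ℝ) + 1) • G A j t
      + (-t) • ∫ θ in (0:ℝ)..1, θ ^ (j + 1) • (A * exp (((1 - θ) * t) • A)) = 1 := by
  have hderiv : ∀ θ ∈ uIcc (0:ℝ) 1,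
      HasDerivAt (fun θ : ℝ => θ ^ (j + 1) • exp (((1 - θ) * t) • A))
        (θ ^ (j + 1) • ((-t) • (A * exp (((1 - θ) * t) • A)))
          + (↑(j + 1) * θ ^ (j + 1 - 1)) • exp (((1 - θ) * t) • A)) θ :=
    fun θ _ => (hasDerivAt_pow (j + 1) θ).smul (expDtheta A t θ)
  have c1 : IntervalIntegrable (fun θ : ℝ =>
      (↑(j + 1) * θ ^ (j + 1 - 1)) • exp (((1 - θ) * t) • A)) volume 0 1 :=
    ((continuous_const.mul (continuous_pow _)).smul (contExpAff A t)).intervalIntegrable _ _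
  have c2 : IntervalIntegrable (fun θ : ℝ =>
      θ ^ (j + 1) • ((-t) • (A * exp (((1 - θ) * t) • A)))) volume 0 1 :=
    ((continuous_pow (j + 1)).smul ((continuous_const : Continuous fun _ : ℝ => -t).smul
      (continuous_const.mul (contExpAff A t)))).intervalIntegrable _ _
  have h := intervalIntegral.integral_eq_sub_of_hasDerivAt hderiv (c2.add c1)
  rw [intervalIntegral.integral_add c2 c1] at h
  have e1 : (∫ θ in (0:ℝ)..1, (↑(j + 1) * θ ^ (j + 1 - 1)) • exp (((1 - θ) * t) • A))
      = ((j : ℝ) + 1) • G A j t := by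
    rw [G, ← intervalIntegral.integral_smul]
    apply intervalIntegral.integral_congr
    intro θ _
    dsimp only
    rw [smul_smul, Nat.add_sub_cancel, Nat.cast_add, Nat.cast_one]
  have e2 : (∫ θ in (0:ℝ)..1, θ ^ (j + 1) • ((-t) • (A * exp (((1 - θ) * t) • A))))
      = (-t) • ∫ θ in (0:ℝ)..1, θ ^ (j + 1) • (A * exp (((1 - θ) * t) • A)) := by
    rw [← intervalIntegral.integral_smul]
    apply intervalIntegral.integral_congr
    intro θ _
    dsimp only
    exact smul_comm _ _ _
  rw [e1, e2] at h
  rw [add_comm, h]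
  norm_num [exp_zero]

lemma mulG (j : ℕ) (t : ℝ) :
    A * G A j t = ∫ θ in (0:ℝ)..1, θ ^ j • (A * exp (((1 - θ) * t) • A)) := by
  have h := (ContinuousLinearMap.mul ℝ (Matrix (Fin n) (Fin n) ℝ) A).intervalIntegral_comp_comm
    (intg A j t)
  simp only [ContinuousLinearMap.mul_apply'] at h
  rw [G, ← h]
  apply intervalIntegral.integral_congr
  intro θ _
  dsimp only
  rw [mul_smul_comm]

/-- Derivative of `G` itself. -/
lemma hasDerivAt_G (j : ℕ) (t₀ : ℝ) :
    HasDerivAt (G A j)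
      (∫ θ in (0:ℝ)..1, (θ ^ j * (1 - θ)) • (A * exp (((1 - θ) * t₀) • A))) t₀ := by
  obtain ⟨C, hC⟩ := (isCompact_Icc (a := -(|t₀| + 1)) (b := |t₀| + 1)).exists_bound_of_continuousOn
    (Continuous.continuousOn (continuous_const.mul
      (exp_continuous.comp (continuous_id.smul continuous_const)) :
      Continuous fun s : ℝ => A * exp (s • A)))
  have key := intervalIntegral.hasDerivAt_integral_of_dominated_loc_of_deriv_le
    (F := fun t θ => θ ^ j • exp (((1 - θ) * t) • A))
    (F' := fun t θ => (θ ^ j * (1 - θ)) • (A * exp (((1 - θ) * t) • A)))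
    (x₀ := t₀) (a := (0:ℝ)) (b := 1) (μ := volume) (bound := fun _ => max C 0)
    (Metric.ball_mem_nhds t₀ one_pos)
    (Filter.Eventually.of_forall fun t =>
      (((continuous_pow j).smul (contExpAff A t)).aestronglyMeasurable))
    (intg A j t₀)
    ((((continuous_pow j).mul (continuous_const.sub continuous_id)).smul
      (continuous_const.mul (contExpAff A t₀))).aestronglyMeasurable)
    ?_ intervalIntegrable_const ?_
  · exact key.2
  · -- bound
    refine Filter.Eventually.of_forall fun θ hθ t ht => ?_
    rw [Set.uIoc_of_le (by norm_num : (0:ℝ) ≤ 1)] at hθ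
    have hθ0 : 0 < θ := hθ.1
    have hθ1 : θ ≤ 1 := hθ.2
    have htb : |t| ≤ |t₀| + 1 := by
      have hd := Metric.mem_ball.mp ht
      rw [Real.dist_eq] at hd
      calc |t| = |(t - t₀) + t₀| := by ring_nf
        _ ≤ |t - t₀| + |t₀| := abs_add_le _ _
        _ ≤ |t₀| + 1 := by linarith
    have hmem : ((1 - θ) * t) ∈ Set.Icc (-(|t₀| + 1)) (|t₀| + 1) := by
      rw [Set.mem_Icc, ← abs_le]
      calc |(1 - θ) * t| = |1 - θ| * |t| := abs_mul _ _
        _ ≤ 1 * (|t₀| + 1) := by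
            apply mul_le_mul _ htb (abs_nonneg _) zero_le_one
            rw [abs_le]; constructor <;> linarith
        _ = |t₀| + 1 := one_mul _
    calc ‖(θ ^ j * (1 - θ)) • (A * exp (((1 - θ) * t) • A))‖
        = |θ ^ j * (1 - θ)| * ‖A * exp (((1 - θ) * t) • A)‖ := by
          rw [norm_smul, Real.norm_eq_abs]
      _ ≤ 1 * max C 0 := by
          apply mul_le_mul _ ((hC _ hmem).trans (le_max_left _ _)) (norm_nonneg _) zero_le_one
          rw [abs_mul, abs_of_nonneg (pow_nonneg hθ0.le j),
            abs_of_nonneg (by linarith : (0:ℝ) ≤ 1 - θ)]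
          calc θ ^ j * (1 - θ) ≤ 1 * 1 :=
              mul_le_mul (pow_le_one₀ hθ0.le hθ1) (by linarith) (by linarith) zero_le_one
            _ = 1 := mul_one 1
      _ = max C 0 := one_mul _
  · refine Filter.Eventually.of_forall fun θ _ t _ => ?_
    have h := (expDt A θ t).const_smul (θ ^ j)
    simp only [smul_smul] at h
    exact h

/-- Derivative of `t ↦ t^{j+1} • G j t`. -/
lemma hasDerivAt_tG (j : ℕ) (t : ℝ) :
    HasDerivAt (fun t : ℝ => t ^ (j + 1) • G A j t)
      (t ^ j • (1 : Matrix (Fin n) (Fin n) ℝ) + A * (t ^ (j + 1) • G A j t)) t := by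
  have h := (hasDerivAt_pow (j + 1) t).smul (hasDerivAt_G A j t)
  set P := ∫ θ in (0:ℝ)..1, θ ^ j • (A * exp (((1 - θ) * t) • A)) with hPdef
  set Q := ∫ θ in (0:ℝ)..1, θ ^ (j + 1) • (A * exp (((1 - θ) * t) • A)) with hQdef
  have hsplit : (∫ θ in (0:ℝ)..1, (θ ^ j * (1 - θ)) • (A * exp (((1 - θ) * t) • A)))
      = P - Q := by
    rw [hPdef, hQdef, ← intervalIntegral.integral_sub (intgA A j t) (intgA A (j + 1) t)]
    apply intervalIntegral.integral_congr
    intro θ _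
    dsimp only
    rw [← sub_smul]
    congr 1
    ring
  rw [hsplit] at h
  have hftc := ftc A j t
  rw [← hQdef] at hftc
  have hG1 : ((j : ℝ) + 1) • G A j t = 1 + t • Q := by
    rw [← hftc, neg_smul]; abel
  have hAG : A * (t ^ (j + 1) • G A j t) = t ^ (j + 1) • P := by
    rw [mul_smul_comm, mulG, ← hPdef]
  refine h.congr_deriv (Eq.symm ?_)
  rw [hAG, Nat.add_sub_cancel, Nat.cast_add, Nat.cast_one, mul_comm ((j : ℝ) + 1), ← smul_smul,
    hG1, smul_add, smul_smul, ← pow_succ, smul_sub]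
  abel

end PhiIVP

section

attribute [local instance] PhiIVP.matNR PhiIVP.matNA PhiIVP.matNAQ

theorem phi_solves_ivp {n : ℕ} (A : Matrix (Fin n) (Fin n) ℝ) (p : ℕ) (hp : 1 ≤ p)
    (b : ℕ → Fin n → ℝ) (u : ℝ → Fin n → ℝ)
    (hu : u = fun t => (phiM 0 (t • A)).mulVec (b 0) +
      ∑ j ∈ Finset.range p, t ^ (j + 1) • (phiM (j + 1) (t • A)).mulVec (b (j + 1))) :
    u 0 = b 0 ∧ ∀ t : ℝ,
      HasDerivAt u (A.mulVec (u t) + ∑ j ∈ Finset.range p, (t ^ j / j !) • b (j + 1)) t := by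
  have hufun : u = fun t => PhiIVP.mv (b 0) (exp (t • A)) +
      ∑ j ∈ Finset.range p, PhiIVP.mv (b (j + 1))
        ((j ! : ℝ)⁻¹ • (t ^ (j + 1) • PhiIVP.G A j t)) := by
    rw [hu]; funext s
    have h1 : (phiM 0 (s • A)).mulVec (b 0) = PhiIVP.mv (b 0) (exp (s • A)) := by
      rw [PhiIVP.mv_apply]; simp [phiM]
    have h2 : ∀ j : ℕ, s ^ (j + 1) • (phiM (j + 1) (s • A)).mulVec (b (j + 1))
        = PhiIVP.mv (b (j + 1)) ((j ! : ℝ)⁻¹ • (s ^ (j + 1) • PhiIVP.G A j s)) := by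
      intro j
      rw [PhiIVP.mv_apply, PhiIVP.phiM_eq, Matrix.smul_mulVec, Matrix.smul_mulVec,
        Matrix.smul_mulVec, smul_comm]
    rw [h1]
    congr 1
    exact Finset.sum_congr rfl fun j _ => h2 j
  constructor
  · rw [hu]
    dsimp only
    rw [zero_smul]
    simp [phiM, exp_zero, Matrix.one_mulVec]
  · intro t
    have hmv0 : HasDerivAt (fun t : ℝ => PhiIVP.mv (b 0) (exp (t • A)))
        (PhiIVP.mv (b 0) (A * exp (t • A))) t :=
      (PhiIVP.mv (b 0)).hasFDerivAt.comp_hasDerivAt t (hasDerivAt_exp_smul_const' A t)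
    have hsum : ∀ j ∈ Finset.range p, HasDerivAt
        (fun t : ℝ => PhiIVP.mv (b (j + 1)) ((j ! : ℝ)⁻¹ • (t ^ (j + 1) • PhiIVP.G A j t)))
        (PhiIVP.mv (b (j + 1)) ((j ! : ℝ)⁻¹ •
          (t ^ j • (1 : Matrix (Fin n) (Fin n) ℝ) + A * (t ^ (j + 1) • PhiIVP.G A j t)))) t := by
      intro j _
      exact (PhiIVP.mv _).hasFDerivAt.comp_hasDerivAt t
        ((PhiIVP.hasDerivAt_tG A j t).const_smul ((j ! : ℝ)⁻¹))
    have hall := hmv0.add (HasDerivAt.sum hsum)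
    rw [hufun]
    convert hall using 1
    case e'_4 => rfl
    case e'_5 => rfl
    case e'_6 => rfl
    case e'_8 => funext s; simp [Finset.sum_apply]
    rw [Matrix.mulVec_add]
    have hAsum : A.mulVec (∑ j ∈ Finset.range p, PhiIVP.mv (b (j + 1))
        ((j ! : ℝ)⁻¹ • (t ^ (j + 1) • PhiIVP.G A j t)))
        = ∑ j ∈ Finset.range p, A.mulVec (PhiIVP.mv (b (j + 1))
          ((j ! : ℝ)⁻¹ • (t ^ (j + 1) • PhiIVP.G A j t))) := by
      rw [← Matrix.mulVecLin_apply, map_sum]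
      simp only [Matrix.mulVecLin_apply]
    rw [hAsum]
    have hterm : ∀ j, PhiIVP.mv (b (j + 1)) ((j ! : ℝ)⁻¹ •
          (t ^ j • (1 : Matrix (Fin n) (Fin n) ℝ) + A * (t ^ (j + 1) • PhiIVP.G A j t)))
        = (t ^ j / j !) • b (j + 1)
          + A.mulVec (PhiIVP.mv (b (j + 1)) ((j ! : ℝ)⁻¹ • (t ^ (j + 1) • PhiIVP.G A j t))) := by
      intro j
      rw [PhiIVP.mv_apply, PhiIVP.mv_apply, Matrix.smul_mulVec, Matrix.add_mulVec,
        Matrix.smul_mulVec, Matrix.one_mulVec, Matrix.smul_mulVec,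
        Matrix.mulVec_smul, smul_add, smul_smul, ← Matrix.mulVec_mulVec]
      congr 1
      rw [div_eq_mul_inv]
      ring
    have hm0 : PhiIVP.mv (b 0) (A * exp (t • A))
        = A.mulVec (PhiIVP.mv (b 0) (exp (t • A))) := by
      rw [PhiIVP.mv_apply, PhiIVP.mv_apply, Matrix.mulVec_mulVec]
    simp only [hterm, hm0, Finset.sum_add_distrib]
    abel

end
end

section
/- Let H be an m×m matrix and p ≥ 1. Define the (m+p)×(m+p) block matrix Ĥ = [[H, e₁, 0], [0, 0, I_{p−1}], [0, 0, 0]], where e₁ ∈ ℝ^m is the first standard basis vector and the bottom-right blocks form a nilpotent shift. Then the top m entries of the last column of exp(Ĥ) equal the vector φ_p(H) e₁. -/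
open scoped Nat
open NormedSpace

open intervalIntegral in
lemma beta_nat : ∀ (n q : ℕ), ∫ θ in (0:ℝ)..1, θ ^ q * (1 - θ) ^ n
    = (q ! : ℝ) * n ! / (q + n + 1)! := by
  intro n
  induction n with
  | zero =>
    intro q
    have : ((q:ℝ) + 1) ≠ 0 := by positivity
    have h2 : (q ! : ℝ) ≠ 0 := by exact_mod_cast q.factorial_ne_zero
    simp [integral_pow, Nat.factorial_succ]
    field_simp
  | succ n IH =>
    intro q
    have hderiv : ∀ θ ∈ Set.uIcc (0:ℝ) 1, HasDerivAt (fun x : ℝ => x ^ (q+1) * (1 - x) ^ (n+1))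
        ((q+1 : ℝ) * θ ^ q * (1-θ)^(n+1) - (n+1 : ℝ) * (θ ^ (q+1) * (1-θ)^n)) θ := by
      intro θ _
      have h1 := hasDerivAt_pow (q+1) θ
      have h2 := ((hasDerivAt_id θ).const_sub 1).pow (n+1)
      have := h1.mul h2
      refine this.congr_deriv ?_
      push_cast
      ring_nf
      simp [mul_comm, mul_assoc, mul_left_comm]
      ring
    have hint1 : IntervalIntegrable (fun θ : ℝ => (q+1:ℝ) * θ ^ q * (1-θ)^(n+1)) MeasureTheory.volume 0 1 := by
      apply Continuous.intervalIntegrable; fun_prop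
    have hint2 : IntervalIntegrable (fun θ : ℝ => (n+1:ℝ) * (θ ^ (q+1) * (1-θ)^n)) MeasureTheory.volume 0 1 := by
      apply Continuous.intervalIntegrable; fun_prop
    have hint : IntervalIntegrable (fun θ : ℝ => (q+1 : ℝ) * θ ^ q * (1-θ)^(n+1) - (n+1 : ℝ) * (θ ^ (q+1) * (1-θ)^n)) MeasureTheory.volume 0 1 := by
      apply Continuous.intervalIntegrable; fun_prop
    have key := intervalIntegral.integral_eq_sub_of_hasDerivAt hderiv hint
    rw [intervalIntegral.integral_sub hint1 hint2] at key
    norm_num at key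
    have e1 : (∫ θ in (0:ℝ)..1, (q+1:ℝ) * θ ^ q * (1-θ)^(n+1))
        = (q+1:ℝ) * ∫ θ in (0:ℝ)..1, θ ^ q * (1-θ)^(n+1) := by
      rw [← intervalIntegral.integral_const_mul]
      congr 1; ext θ; ring
    rw [IH (q+1), e1] at key
    try rw [show q+1+n+1 = q+(n+1)+1 from by omega] at key
    rw [show q+(n+1)+1 = q+n+1+1 from by omega, Nat.factorial_succ (q+n+1), Nat.factorial_succ q] at key
    have hq1 : ((q:ℝ)+1) ≠ 0 := by positivity
    have hfac : ((q+(n+1)+1)! : ℝ) ≠ 0 := by exact_mod_cast Nat.factorial_ne_zero _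
    rw [show q+(n+1)+1 = q+n+1+1 from by omega, Nat.factorial_succ (q+n+1), Nat.factorial_succ n]
    push_cast at key ⊢
    have hfp : (0:ℝ) < ↑(q+n+1)! := by exact_mod_cast (q+n+1).factorial_pos
    have hD : (0:ℝ) < ((q:ℝ)+1) * (((q:ℝ)+(n:ℝ)+1+1) * ↑(q+n+1)!) :=
      mul_pos (by positivity) (mul_pos (by positivity) hfp)
    have hden : ((q:ℝ)+(n:ℝ)+1+1) * ↑(q+n+1)! ≠ 0 := ne_of_gt (mul_pos (by positivity) hfp)
    field_simp [hden] at key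
    have hI : (∫ θ in (0:ℝ)..1, θ^q*(1-θ)^(n+1))
        = (((n:ℝ)+1) * (((q:ℝ)+1) * ↑q ! * ↑n !)) / (((q:ℝ)+1) * (((q:ℝ)+(n:ℝ)+1+1) * ↑(q+n+1)!)) := by
      rw [eq_div_iff (ne_of_gt hD)]
      linear_combination key
    rw [hI, div_eq_div_iff (ne_of_gt hD) (by exact ne_of_gt (mul_pos (by positivity) hfp))]
    ring

section ExpEntry
variable {d : ℕ}

noncomputable def entryL (i j : Fin d) : Matrix (Fin d) (Fin d) ℝ →ₗ[ℝ] ℝ where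
  toFun A := A i j
  map_add' _ _ := rfl
  map_smul' _ _ := rfl

lemma entry_le (A : Matrix (Fin d) (Fin d) ℝ) (i j : Fin d) :
    ‖A i j‖ ≤ @norm _ (Matrix.linftyOpSemiNormedRing).toNorm A := by
  letI := Matrix.linftyOpSemiNormedRing (n := Fin d) (α := ℝ)
  rw [Matrix.linfty_opNorm_def]
  have h1 : ‖A i j‖₊ ≤ ∑ j' : Fin d, ‖A i j'‖₊ :=
    Finset.single_le_sum (f := fun j' : Fin d => ‖A i j'‖₊) (fun _ _ => zero_le) (Finset.mem_univ j)
  have h2 : (∑ j' : Fin d, ‖A i j'‖₊) ≤ Finset.univ.sup fun i' => ∑ j' : Fin d, ‖A i' j'‖₊ :=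
    Finset.le_sup (f := fun i' : Fin d => ∑ j' : Fin d, ‖A i' j'‖₊) (Finset.mem_univ i)
  exact_mod_cast h1.trans h2

lemma exp_entry (A : Matrix (Fin d) (Fin d) ℝ) (i j : Fin d) :
    exp A i j = ∑' k : ℕ, ((k ! : ℝ)⁻¹) * ((A ^ k) i j) := by
  letI := Matrix.linftyOpNormedRing (n := Fin d) (α := ℝ)
  letI := Matrix.linftyOpNormedAlgebra (n := Fin d) (R := ℝ) (α := ℝ)
  have hs : Summable fun k : ℕ => ((k ! : ℝ)⁻¹) • A ^ k := expSeries_summable' (𝕂 := ℝ) A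
  let e : Matrix (Fin d) (Fin d) ℝ →L[ℝ] ℝ :=
    LinearMap.mkContinuous (entryL i j) 1 (fun B => by rw [one_mul]; exact entry_le B i j)
  have h1 : exp A = ∑' k : ℕ, ((k ! : ℝ)⁻¹) • A ^ k := by
    rw [exp_eq_tsum (𝕂 := ℝ)]
  have h2 : e (∑' k : ℕ, ((k ! : ℝ)⁻¹) • A ^ k) = ∑' k : ℕ, e (((k ! : ℝ)⁻¹) • A ^ k) :=
    e.map_tsum hs
  calc exp A i j = e (∑' k : ℕ, ((k ! : ℝ)⁻¹) • A ^ k) := by rw [h1]; rfl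
    _ = ∑' k : ℕ, e (((k ! : ℝ)⁻¹) • A ^ k) := h2
    _ = ∑' k : ℕ, ((k ! : ℝ)⁻¹) * ((A ^ k) i j) := by
        refine tsum_congr fun k => ?_
        show ((k ! : ℝ)⁻¹ • A ^ k) i j = _
        simp [Matrix.smul_apply]

lemma summable_exp_entry (A : Matrix (Fin d) (Fin d) ℝ) (i j : Fin d) :
    Summable fun k : ℕ => ((k ! : ℝ)⁻¹) * ((A ^ k) i j) := by
  letI := Matrix.linftyOpNormedRing (n := Fin d) (α := ℝ)
  letI := Matrix.linftyOpNormedAlgebra (n := Fin d) (R := ℝ) (α := ℝ)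
  have hs : Summable fun k : ℕ => ((k ! : ℝ)⁻¹) • A ^ k := expSeries_summable' (𝕂 := ℝ) A
  let e : Matrix (Fin d) (Fin d) ℝ →L[ℝ] ℝ :=
    LinearMap.mkContinuous (entryL i j) 1 (fun B => by rw [one_mul]; exact entry_le B i j)
  have := hs.map e.toLinearMap.toAddMonoidHom e.continuous
  refine this.congr fun k => ?_
  show e _ = _
  simp [e, LinearMap.mkContinuous_apply, entryL, Matrix.smul_apply]
  rfl

lemma summable_norm_exp_entry (A : Matrix (Fin d) (Fin d) ℝ) (i j : Fin d) :
    Summable fun k : ℕ => ((k ! : ℝ)⁻¹) * ‖(A ^ k) i j‖ := by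
  letI := Matrix.linftyOpNormedRing (n := Fin d) (α := ℝ)
  letI := Matrix.linftyOpNormedAlgebra (n := Fin d) (R := ℝ) (α := ℝ)
  have hs : Summable fun k : ℕ => ‖((k ! : ℝ)⁻¹) • A ^ k‖ := norm_expSeries_summable' (𝕂 := ℝ) A
  refine Summable.of_nonneg_of_le (fun k => by positivity) (fun k => ?_) hs
  rw [norm_smul]
  gcongr
  · simp
  · exact entry_le _ i j

end ExpEntry

lemma hhat_pow {m p : ℕ} (H : Matrix (Fin m) (Fin m) ℝ)
    (Hhat : Matrix (Fin (m + p)) (Fin (m + p)) ℝ)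
    (hHhat : ∀ i j : Fin (m + p),
      Hhat i j =
        if h1 : (i : ℕ) < m then
          (if h2 : (j : ℕ) < m then H ⟨i, h1⟩ ⟨j, h2⟩
           else if (j : ℕ) = m ∧ (i : ℕ) = 0 then 1 else 0)
        else if (j : ℕ) = (i : ℕ) + 1 then 1 else 0) (k : ℕ) :
    (∀ i j : Fin m, (Hhat ^ k) (Fin.castAdd p i) (Fin.castAdd p j) = (H ^ k) i j) ∧
    (∀ (r : ℕ) (hr : r < p) (c : Fin (m + p)) (hc : (c : ℕ) = m + r) (i : Fin m),
      (Hhat ^ k) (Fin.castAdd p i) c =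
      if r + 1 ≤ k then (H ^ (k - 1 - r)) i ⟨0, i.pos⟩ else 0) := by
  have E1 : ∀ (l j : Fin m), Hhat (Fin.castAdd p l) (Fin.castAdd p j) = H l j := by
    intro l j
    rw [hHhat, dif_pos (show ((Fin.castAdd p l : Fin (m+p)) : ℕ) < m from l.isLt),
      dif_pos (show ((Fin.castAdd p j : Fin (m+p)) : ℕ) < m from j.isLt)]
    simp
  have E2 : ∀ (l : Fin p) (j : Fin m), Hhat (Fin.natAdd m l) (Fin.castAdd p j) = 0 := by
    intro l j
    rw [hHhat, dif_neg (by simp), if_neg (by simp; omega)]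
  have E3 : ∀ (l : Fin m) (r : ℕ) (hr : r < p) (c : Fin (m + p)) (hc : (c : ℕ) = m + r),
      Hhat (Fin.castAdd p l) c =
        if r = 0 ∧ (l : ℕ) = 0 then 1 else 0 := by
    intro l r hr c hc
    rw [hHhat, dif_pos (show ((Fin.castAdd p l : Fin (m+p)) : ℕ) < m from l.isLt),
      dif_neg (by omega)]
    simp only [Fin.coe_castAdd]
    congr 1
    simp only [eq_iff_iff, and_congr_left_iff]
    intro _; omega
  have E4 : ∀ (l : Fin p) (r : ℕ) (hr : r < p) (c : Fin (m + p)) (hc : (c : ℕ) = m + r),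
      Hhat (Fin.natAdd m l) c = if r = (l : ℕ) + 1 then 1 else 0 := by
    intro l r hr c hc
    rw [hHhat, dif_neg (by simp)]
    congr 1
    simp only [eq_iff_iff, Fin.coe_natAdd]
    omega
  induction k with
  | zero =>
    refine ⟨fun i j => ?_, fun r hr c hc i => ?_⟩
    · simp [Matrix.one_apply, Fin.ext_iff]
    · rw [pow_zero, Matrix.one_apply_ne (by simp [Fin.ext_iff]; omega), if_neg (by omega)]
  | succ k IH =>
    obtain ⟨IH1, IH2⟩ := IH
    constructor
    · intro i j
      rw [pow_succ, Matrix.mul_apply, Fin.sum_univ_add]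
      have h2 : ∀ l : Fin p,
          (Hhat ^ k) (Fin.castAdd p i) (Fin.natAdd m l) * Hhat (Fin.natAdd m l) (Fin.castAdd p j) = 0 := by
        intro l; rw [E2, mul_zero]
      rw [Finset.sum_congr rfl (fun l _ => h2 l), Finset.sum_const_zero, add_zero]
      rw [pow_succ, Matrix.mul_apply]
      refine Finset.sum_congr rfl fun l _ => ?_
      rw [E1, IH1]
    · intro r hr c hc i
      have hm : 0 < m := i.pos
      rw [pow_succ, Matrix.mul_apply, Fin.sum_univ_add]
      simp only [fun l : Fin m => E3 l r hr c hc, fun l : Fin p => E4 l r hr c hc]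
      rcases Nat.eq_zero_or_pos r with hr0 | hrpos
      · subst hr0
        have hsum1 : (∑ l : Fin m, (Hhat ^ k) (Fin.castAdd p i) (Fin.castAdd p l) *
            (if 0 = 0 ∧ (l : ℕ) = 0 then 1 else 0)) = (H ^ k) i ⟨0, hm⟩ := by
          rw [Finset.sum_eq_single (⟨0, hm⟩ : Fin m)]
          · rw [if_pos ⟨rfl, rfl⟩, mul_one]
            exact IH1 i ⟨0, hm⟩
          · intro b _ hb
            rw [if_neg (by simp [Fin.ext_iff] at hb ⊢; omega), mul_zero]
          · simp
        have hsum2 : (∑ l : Fin p, (Hhat ^ k) (Fin.castAdd p i) (Fin.natAdd m l) *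
            (if 0 = (l : ℕ) + 1 then 1 else 0)) = 0 := by
          apply Finset.sum_eq_zero
          intro l _
          rw [if_neg (by omega), mul_zero]
        rw [hsum1, hsum2, add_zero, if_pos (by omega)]
        simp
      · obtain ⟨s, rfl⟩ : ∃ s, r = s + 1 := ⟨r - 1, by omega⟩
        have hsum1 : (∑ l : Fin m, (Hhat ^ k) (Fin.castAdd p i) (Fin.castAdd p l) *
            (if s + 1 = 0 ∧ (l : ℕ) = 0 then 1 else 0)) = 0 := by
          apply Finset.sum_eq_zero
          intro l _
          rw [if_neg (by omega), mul_zero]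
        have hs : s < p := by omega
        have hsum2 : (∑ l : Fin p, (Hhat ^ k) (Fin.castAdd p i) (Fin.natAdd m l) *
            (if s + 1 = (l : ℕ) + 1 then 1 else 0)) =
            (Hhat ^ k) (Fin.castAdd p i) (Fin.natAdd m ⟨s, hs⟩) := by
          rw [Finset.sum_eq_single (⟨s, hs⟩ : Fin p)]
          · rw [if_pos rfl, mul_one]
          · intro b _ hb
            rw [if_neg (by simp [Fin.ext_iff] at hb ⊢; omega), mul_zero]
          · simp
        rw [hsum1, hsum2, zero_add, IH2 s hs (Fin.natAdd m ⟨s, hs⟩) (by simp) i]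
        by_cases hk : s + 1 ≤ k
        · rw [if_pos hk, if_pos (by omega), show k + 1 - 1 - (s + 1) = k - 1 - s from by omega]
        · rw [if_neg hk, if_neg (by omega)]

theorem exp_augmented_last_column {m p : ℕ} (hp : 1 ≤ p) (H : Matrix (Fin m) (Fin m) ℝ)
    (Hhat : Matrix (Fin (m + p)) (Fin (m + p)) ℝ)
    (hHhat : ∀ i j : Fin (m + p),
      Hhat i j =
        if h1 : (i : ℕ) < m then
          (if h2 : (j : ℕ) < m then H ⟨i, h1⟩ ⟨j, h2⟩
           else if (j : ℕ) = m ∧ (i : ℕ) = 0 then 1 else 0)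
        else if (j : ℕ) = (i : ℕ) + 1 then 1 else 0) :
    ∀ i : Fin m, (exp Hhat) (Fin.castLE (Nat.le_add_right m p) i) ⟨m + p - 1, by omega⟩ =
      (phiM p H).mulVec (fun j : Fin m => if (j : ℕ) = 0 then 1 else 0) i := by
  intro i
  have hm : 0 < m := i.pos
  have hfacne : ∀ q : ℕ, (q ! : ℝ) ≠ 0 := fun q => by exact_mod_cast q.factorial_ne_zero
  -- the distinguished indices
  set z : Fin m := ⟨0, hm⟩ with hz
  -- LHS
  have hpow := fun k => hhat_pow H Hhat hHhat k
  have hLHS : (exp Hhat) (Fin.castLE (Nat.le_add_right m p) i) ⟨m + p - 1, by omega⟩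
      = ∑' n : ℕ, (((n + p)! : ℝ))⁻¹ * (H ^ n) i z := by
    show (exp Hhat) (Fin.castAdd p i) ⟨m + p - 1, by omega⟩ = _
    rw [exp_entry]
    have hterm : ∀ k : ℕ, ((k ! : ℝ)⁻¹) * ((Hhat ^ k) (Fin.castAdd p i) ⟨m + p - 1, by omega⟩)
        = (k ! : ℝ)⁻¹ * (if (p-1) + 1 ≤ k then (H ^ (k - 1 - (p-1))) i z else 0) := by
      intro k
      rw [(hpow k).2 (p-1) (by omega) ⟨m + p - 1, by omega⟩ (show m + p - 1 = m + (p - 1) from by omega) i]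
    have hsummable : Summable fun k : ℕ =>
        ((k ! : ℝ)⁻¹) * ((Hhat ^ k) (Fin.castAdd p i) ⟨m + p - 1, by omega⟩) :=
      summable_exp_entry Hhat _ _
    rw [← Summable.sum_add_tsum_nat_add p hsummable]
    have h0 : (∑ k ∈ Finset.range p, ((k ! : ℝ)⁻¹) *
        ((Hhat ^ k) (Fin.castAdd p i) ⟨m + p - 1, by omega⟩)) = 0 := by
      apply Finset.sum_eq_zero
      intro k hk
      rw [hterm k, if_neg (by simp at hk; omega), mul_zero]
    rw [h0, zero_add]
    refine tsum_congr fun n => ?_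
    rw [hterm (n + p), if_pos (by omega), show n + p - 1 - (p - 1) = n from by omega]
  -- RHS
  have hRHS0 : (phiM p H).mulVec (fun j : Fin m => if (j : ℕ) = 0 then 1 else 0) i
      = phiM p H i z := by
    show (∑ j : Fin m, phiM p H i j * (if (j : ℕ) = 0 then 1 else 0)) = phiM p H i z
    rw [Finset.sum_eq_single z]
    · rw [if_pos rfl, mul_one]
    · intro b _ hb
      rw [if_neg (by simp [hz, Fin.ext_iff] at hb ⊢; omega), mul_zero]
    · simp
  have hphi : phiM p H i z = (1 / ((p - 1)! : ℝ)) *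
      ∫ θ in (0:ℝ)..1, (exp ((1 - θ) • H)) i z * θ ^ (p - 1) := by
    rw [phiM, if_neg (by omega)]
    rfl
  -- the continuous maps
  set c : ℕ → ℝ := fun n => (n ! : ℝ)⁻¹ * (H ^ n) i z with hc
  let fC : ℕ → C(ℝ, ℝ) := fun n =>
    ⟨fun θ => c n * (θ ^ (p-1) * (1 - θ) ^ n), by fun_prop⟩
  have hnorm : Summable fun n : ℕ =>
      ‖(fC n).restrict (⟨Set.uIcc (0:ℝ) 1, isCompact_uIcc⟩ : TopologicalSpace.Compacts ℝ)‖ := by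
    refine Summable.of_nonneg_of_le (fun n => norm_nonneg _) (fun n => ?_)
      (summable_norm_exp_entry H i z)
    rw [ContinuousMap.norm_le _ (by positivity)]
    rintro ⟨x, hx⟩
    have hx' : x ∈ Set.Icc (0:ℝ) 1 := by
      rw [← Set.uIcc_of_le (by norm_num : (0:ℝ) ≤ 1)]; exact hx
    have hx0 : 0 ≤ x := hx'.1
    have hx1 : x ≤ 1 := hx'.2
    show |c n * (x ^ (p-1) * (1-x)^n)| ≤ _
    rw [abs_mul]
    have hb : |x ^ (p-1) * (1-x)^n| ≤ 1 := by
      rw [abs_mul, abs_pow, abs_pow]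
      have := abs_of_nonneg hx0
      have h2 : |x| ≤ 1 := by rw [abs_of_nonneg hx0]; exact hx1
      have h3 : |1 - x| ≤ 1 := by rw [abs_of_nonneg (by linarith)]; linarith
      calc |x| ^ (p-1) * |1-x| ^ n ≤ 1 ^ (p-1) * 1 ^ n := by
            gcongr
            all_goals first | exact abs_nonneg _ | exact h2 | exact h3
        _ = 1 := by simp
    calc |c n| * |x ^ (p-1) * (1-x)^n| ≤ |c n| * 1 := by gcongr
      _ = (n ! : ℝ)⁻¹ * ‖(H ^ n) i z‖ := by
          rw [mul_one, hc, abs_mul, abs_of_nonneg (by positivity)]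
          rfl
  have hswap := intervalIntegral.tsum_intervalIntegral_eq_of_summable_norm
    (a := 0) (b := 1) hnorm
  -- pointwise identification of the tsum with the exp integrand
  have hpointwise : ∀ θ : ℝ, (∑' n : ℕ, fC n θ)
      = (exp ((1 - θ) • H)) i z * θ ^ (p - 1) := by
    intro θ
    rw [exp_entry]
    have : ∀ n : ℕ, ((n ! : ℝ)⁻¹) * ((((1-θ) • H) ^ n) i z)
        = (n ! : ℝ)⁻¹ * ((1-θ)^n * (H ^ n) i z) := by
      intro n
      rw [smul_pow, Matrix.smul_apply, smul_eq_mul]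
    rw [tsum_congr this, ← tsum_mul_right]
    refine tsum_congr fun n => ?_
    show c n * (θ ^ (p-1) * (1-θ)^n) = ((n ! : ℝ)⁻¹ * ((1-θ)^n * (H ^ n) i z)) * θ ^ (p-1)
    rw [hc]; ring
  -- compute each integral
  have hint : ∀ n : ℕ, (∫ θ in (0:ℝ)..1, fC n θ)
      = c n * (((p-1)! : ℝ) * (n ! : ℝ) / ((n + p)! : ℝ)) := by
    intro n
    show (∫ θ in (0:ℝ)..1, c n * (θ ^ (p-1) * (1 - θ) ^ n)) = _
    rw [intervalIntegral.integral_const_mul, beta_nat n (p-1),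
      show p - 1 + n + 1 = n + p from by omega]
  -- put the RHS together
  have hRHS : (phiM p H).mulVec (fun j : Fin m => if (j : ℕ) = 0 then 1 else 0) i
      = ∑' n : ℕ, (((n + p)! : ℝ))⁻¹ * (H ^ n) i z := by
    rw [hRHS0, hphi]
    have hintegrand : (∫ θ in (0:ℝ)..1, (exp ((1 - θ) • H)) i z * θ ^ (p - 1))
        = ∫ θ in (0:ℝ)..1, ∑' n : ℕ, fC n θ := by
      congr 1
      ext θ
      rw [hpointwise θ]
    rw [hintegrand, ← hswap, ← tsum_mul_left]
    refine tsum_congr fun n => ?_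
    rw [hint n, hc]
    have h1 := hfacne n
    have h2 := hfacne (p-1)
    have h3 := hfacne (n+p)
    field_simp
  rw [hLHS, hRHS]
end

section
/- Let A be an n×n matrix, u_k ∈ ℝⁿ, b_1,…,b_p ∈ ℝⁿ, and t_k, τ ∈ ℝ. Define w_0 = u_k and w_j = A w_{j−1} + ∑_{ℓ=0}^{p−j} (t_k^ℓ/ℓ!) b_{j+ℓ} for j = 1,…,p. Then φ_0(τA) u_k + ∑_{i=1}^p τ^i φ_i(τA) ∑_{j=0}^{p−i} (t_k^j/j!) b_{i+j} = τ^p φ_p(τA) w_p + ∑_{j=0}^{p−1} (τ^j/j!) w_j. -/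
open scoped Nat
open NormedSpace

section rec
variable {n : ℕ} (M : Matrix (Fin n) (Fin n) ℝ)

attribute [local instance] Matrix.linftyOpNormedRing Matrix.linftyOpNormedAlgebra

noncomputable local instance matCS : CompleteSpace (Matrix (Fin n) (Fin n) ℝ) :=
  FiniteDimensional.complete ℝ _

private lemma hE (θ : ℝ) : HasDerivAt (fun θ : ℝ => exp ((1 - θ) • M))
    (-(exp ((1 - θ) • M) * M)) θ := by
  have h1 : HasDerivAt (fun θ : ℝ => 1 - θ) (-1) θ := (hasDerivAt_id θ).const_sub 1
  have h2 := hasDerivAt_exp_smul_const (𝕂 := ℝ) M (1 - θ)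
  have h3 := h2.scomp θ h1
  simp at h3
  exact h3

private lemma hEij (i j : Fin n) (θ : ℝ) :
    HasDerivAt (fun θ : ℝ => (exp ((1 - θ) • M)) i j)
      (-(exp ((1 - θ) • M) * M) i j) θ := by
  exact (LinearMap.toContinuousLinearMap
    (Matrix.entryLinearMap ℝ ℝ i j)).hasFDerivAt.comp_hasDerivAt θ (hE M θ)

private lemma contEij (i j : Fin n) :
    Continuous (fun θ : ℝ => (exp ((1 - θ) • M)) i j) :=
  Differentiable.continuous (fun θ => (hEij M i j θ).differentiableAt)

private lemma contMij (i j : Fin n) :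
    Continuous (fun θ : ℝ => (exp ((1 - θ) • M) * M) i j) := by
  simp only [Matrix.mul_apply]
  exact continuous_finset_sum _ fun k _ => (contEij M i k).mul continuous_const

private lemma ftc (q : ℕ) (i j : Fin n) :
    (1/(q ! : ℝ)) * ∫ θ in (0:ℝ)..1, (exp ((1 - θ) • M)) i j * θ ^ q
      = ((q+1)! : ℝ)⁻¹ * (1 : Matrix (Fin n) (Fin n) ℝ) i j
        + (1/((q+1)! : ℝ)) * ∫ θ in (0:ℝ)..1, (exp ((1 - θ) • M) * M) i j * θ ^ (q+1) := by
  have hq : (q ! : ℝ) ≠ 0 := Nat.cast_ne_zero.mpr (Nat.factorial_ne_zero _)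
  have hq1 : (((q+1))! : ℝ) ≠ 0 := Nat.cast_ne_zero.mpr (Nat.factorial_ne_zero _)
  have hfac : ((q+1)! : ℝ) = (q+1) * q ! := by
    push_cast [Nat.factorial_succ]; ring
  have hderiv : ∀ θ ∈ Set.uIcc (0:ℝ) 1,
      HasDerivAt (fun θ : ℝ => θ^(q+1)/((q+1)! : ℝ) * (exp ((1 - θ) • M)) i j)
        ((1/(q ! : ℝ)) * ((exp ((1 - θ) • M)) i j * θ ^ q)
          - (1/((q+1)! : ℝ)) * ((exp ((1 - θ) • M) * M) i j * θ ^ (q+1))) θ := by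
    intro θ _
    have hc : HasDerivAt (fun θ : ℝ => θ^(q+1)/((q+1)! : ℝ)) ((((q:ℝ)+1) * θ^q)/((q+1)! : ℝ)) θ := by
      simpa using (hasDerivAt_pow (q+1) θ).div_const ((q+1)! : ℝ)
    have h2 := hc.mul (hEij M i j θ)
    refine h2.congr_deriv ?_
    rw [hfac]
    field_simp
    ring
  have hint1 : IntervalIntegrable (fun θ : ℝ => (exp ((1 - θ) • M)) i j * θ ^ q)
      MeasureTheory.volume 0 1 :=
    ((contEij M i j).mul (continuous_pow q)).intervalIntegrable _ _
  have hint2 : IntervalIntegrable (fun θ : ℝ => (exp ((1 - θ) • M) * M) i j * θ ^ (q+1))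
      MeasureTheory.volume 0 1 :=
    ((contMij M i j).mul (continuous_pow (q+1))).intervalIntegrable _ _
  have h := intervalIntegral.integral_eq_sub_of_hasDerivAt hderiv
    ((hint1.const_mul _).sub (hint2.const_mul _))
  rw [intervalIntegral.integral_sub (hint1.const_mul _) (hint2.const_mul _),
    intervalIntegral.integral_const_mul, intervalIntegral.integral_const_mul] at h
  have he1 : exp ((1 - (1:ℝ)) • M) = 1 := by norm_num [exp_zero]
  simp only [he1, one_pow, zero_pow, sub_zero, Nat.succ_ne_zero, ne_eq, not_false_iff,
    zero_div, zero_mul, sub_zero, one_div] at h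
  simp only [one_div] at h ⊢
  linarith [h]

private lemma hmulentry (q : ℕ) (i j : Fin n) :
    (phiM (q+1) M * M) i j
      = (1/(q ! : ℝ)) * ∫ θ in (0:ℝ)..1, (exp ((1 - θ) • M) * M) i j * θ ^ q := by
  have hint : ∀ k : Fin n, IntervalIntegrable
      (fun θ : ℝ => exp ((1 - θ) • M) i k * M k j * θ ^ q) MeasureTheory.volume 0 1 :=
    fun k => (((contEij M i k).mul continuous_const).mul (continuous_pow q)).intervalIntegrable _ _
  have step1 : ∀ k : Fin n,
      (1/(q ! : ℝ) * ∫ θ in (0:ℝ)..1, exp ((1 - θ) • M) i k * θ ^ q) * M k j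
        = 1/(q ! : ℝ) * ∫ θ in (0:ℝ)..1, exp ((1 - θ) • M) i k * M k j * θ ^ q := by
    intro k
    rw [mul_assoc, ← intervalIntegral.integral_mul_const]
    congr 1
    exact intervalIntegral.integral_congr fun θ _ => by ring
  rw [Matrix.mul_apply]
  simp only [phiM, Nat.succ_ne_zero, if_false, Matrix.of_apply, Nat.add_sub_cancel]
  rw [Finset.sum_congr rfl fun k _ => step1 k, ← Finset.mul_sum,
      ← intervalIntegral.integral_finset_sum fun k _ => hint k]
  congr 1
  exact intervalIntegral.integral_congr fun θ _ => by
    rw [Matrix.mul_apply, Finset.sum_mul]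

lemma phiM_rec (q : ℕ) :
    phiM q M = phiM (q+1) M * M + ((q ! : ℝ)⁻¹) • (1 : Matrix (Fin n) (Fin n) ℝ) := by
  ext i j
  rw [Matrix.add_apply, Matrix.smul_apply, smul_eq_mul, hmulentry M q i j]
  cases q with
  | zero =>
    have hint : IntervalIntegrable (fun θ : ℝ => -((exp ((1 - θ) • M) * M) i j))
        MeasureTheory.volume 0 1 := ((contMij M i j).neg).intervalIntegrable _ _
    have h := intervalIntegral.integral_eq_sub_of_hasDerivAt
      (f := fun θ : ℝ => exp ((1 - θ) • M) i j) (fun θ _ => hEij M i j θ) hint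
    rw [intervalIntegral.integral_neg] at h
    have he1 : exp ((1 - (1:ℝ)) • M) = 1 := by norm_num [exp_zero]
    have he0 : exp ((1 - (0:ℝ)) • M) = exp M := by norm_num
    simp only [he1, he0, Matrix.one_apply] at h
    simp only [phiM, if_true, eq_self_iff_true, Matrix.one_apply]
    simp only [Nat.factorial_zero, Nat.cast_one, inv_one, one_div, one_mul]
    have : (∫ θ in (0:ℝ)..1, (exp ((1 - θ) • M) * M) i j * θ ^ 0)
        = ∫ θ in (0:ℝ)..1, (exp ((1 - θ) • M) * M) i j := by
      exact intervalIntegral.integral_congr fun θ _ => by ring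
    rw [this]
    linarith [h]
  | succ q =>
    simp only [phiM, Nat.succ_ne_zero, if_false, Matrix.of_apply, Nat.add_sub_cancel]
    have h := ftc M q i j
    simp only [one_div] at h ⊢
    linarith [h]

end rec

lemma key_ind {n : ℕ} (A : Matrix (Fin n) (Fin n) ℝ) (τ : ℝ) (p : ℕ)
    (w c : ℕ → Fin n → ℝ)
    (hw : ∀ j, 1 ≤ j → j ≤ p → w j = A.mulVec (w (j - 1)) + c j) :
    ∀ m, m ≤ p →
      (phiM 0 (τ • A)).mulVec (w 0) +
          ∑ i ∈ Finset.Icc 1 p, τ ^ i • (phiM i (τ • A)).mulVec (c i)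
        = τ ^ m • (phiM m (τ • A)).mulVec (w m) +
            (∑ j ∈ Finset.range m, (τ ^ j / j !) • w j) +
            ∑ i ∈ Finset.Icc (m + 1) p, τ ^ i • (phiM i (τ • A)).mulVec (c i) := by
  intro m
  induction m with
  | zero => intro _; simp
  | succ m ih =>
    intro hm1
    rw [ih (by omega)]
    rw [← Finset.insert_Icc_add_one_left_eq_Icc hm1, Finset.sum_insert (by simp)]
    rw [phiM_rec (τ • A) m, Matrix.add_mulVec, Matrix.smul_mulVec, Matrix.one_mulVec,
      ← Matrix.mulVec_mulVec]
    have hAw : A.mulVec (w m) = w (m + 1) - c (m + 1) := by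
      have h := hw (m + 1) (by omega) hm1
      simp only [Nat.add_sub_cancel] at h
      rw [h]; abel
    have hNw : (τ • A).mulVec (w m) = τ • (w (m + 1) - c (m + 1)) := by
      rw [Matrix.smul_mulVec, hAw]
    rw [hNw, Matrix.mulVec_smul, Matrix.mulVec_sub]
    rw [Finset.sum_range_succ]
    simp only [div_eq_mul_inv]
    module

theorem timestep_formula {n : ℕ} (A : Matrix (Fin n) (Fin n) ℝ) (p : ℕ) (hp : 1 ≤ p)
    (uk : Fin n → ℝ) (b : ℕ → Fin n → ℝ) (tk τ : ℝ) (w : ℕ → Fin n → ℝ)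
    (hw0 : w 0 = uk)
    (hw : ∀ j, 1 ≤ j → j ≤ p → w j = A.mulVec (w (j - 1)) +
      ∑ l ∈ Finset.range (p - j + 1), (tk ^ l / l !) • b (j + l)) :
    (phiM 0 (τ • A)).mulVec uk +
      ∑ i ∈ Finset.Icc 1 p, τ ^ i • (phiM i (τ • A)).mulVec
        (∑ j ∈ Finset.range (p - i + 1), (tk ^ j / j !) • b (i + j)) =
    τ ^ p • (phiM p (τ • A)).mulVec (w p) +
      ∑ j ∈ Finset.range p, (τ ^ j / j !) • w j := by
  have h := key_ind A τ p w
    (fun i => ∑ j ∈ Finset.range (p - i + 1), (tk ^ j / j !) • b (i + j))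
    (fun j h1 h2 => hw j h1 h2) p le_rfl
  rw [hw0] at h
  rw [Finset.Icc_eq_empty (show ¬p + 1 ≤ p by omega), Finset.sum_empty, add_zero] at h
  simpa using h
end
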